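/- Let M be a matroid with rank function rk on a finite ground set 𝓕. Let C be a finite index set with a subset C_s ⊆ C. For each j ∈ C let F'_j ⊆ G_j ⊆ 𝓕, and for each j ∈ C_s let B_j ⊆ G_j be a set satisfying F'_j ⊆ B_j or B_j ⊆ F'_j; assume the sets {G_j : j ∈ C} are pairwise disjoint. Define the polytope Q = { v : 𝓕 → ℝ | v_i ≥ 0 for all i; Σ_{i∈S} v_i ≤ rk(S) for all S ⊆ 𝓕; Σ_{i∈F'_j} v_i ≥ 1/2 and Σ_{i∈G_j} v_i ≤ 1 for all j ∈ C; Σ_{i∈B_j} v_i = 1 for all j ∈ C_s }. Then every extreme point v of Q is half-integral, i.e. 2·v_i ∈ ℤ for every i ∈ 𝓕. -/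

import Mathlib

set_option linter.unusedSectionVars false
set_option linter.unusedVariables false
set_option maxHeartbeats 1000000

open Finset
attribute [local instance] Classical.propDecidable

section PolytopeAux
variable {α : Type*} [Fintype α] [DecidableEq α]

/-- A finite sum of integral reals is integral. -/
lemma sum_int {T : Finset α} {y : α → ℝ} (h : ∀ j ∈ T, ∃ n : ℤ, y j = (n : ℝ)) :
    ∃ n : ℤ, ∑ j ∈ T, y j = (n : ℝ) := by
  classical
  induction T using Finset.cons_induction with
  | empty => exact ⟨0, by simp⟩
  | cons a s ha ih =>
    obtain ⟨n, hn⟩ := h a (mem_cons_self a s)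
    obtain ⟨m, hm⟩ := ih fun j hj => h j (mem_cons.2 (Or.inr hj))
    exact ⟨n + m, by rw [Finset.sum_cons, hn, hm]; push_cast; ring⟩

lemma inf_mem_of_closed {T 𝒯 : Finset (Finset α)} (hT : T ⊆ 𝒯)
    (hclosed : ∀ S ∈ 𝒯, ∀ S' ∈ 𝒯, S ∩ S' ∈ 𝒯) (hne : T.Nonempty) : T.inf id ∈ 𝒯 := by
  classical
  induction hne using Finset.Nonempty.cons_induction with
  | singleton a => simpa using hT (by simp)
  | cons a s ha hs ih =>
    have ha' : a ∈ 𝒯 := hT (mem_cons_self a s)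
    have hs' : s ⊆ 𝒯 := fun x hx => hT (mem_cons.2 (Or.inr hx))
    have := ih hs'
    rw [Finset.inf_cons]
    simpa [Finset.inf_eq_inter] using hclosed a ha' (s.inf id) this

/-- The infimum of a nonempty chain is a member. -/
lemma inf_mem_of_chain {T : Finset (Finset α)}
    (hchain : ∀ S ∈ T, ∀ S' ∈ T, S ⊆ S' ∨ S' ⊆ S) (hne : T.Nonempty) : T.inf id ∈ T := by
  classical
  induction hne using Finset.Nonempty.cons_induction with
  | singleton a => simp
  | cons a s ha hs ih =>
    have hs' : ∀ S ∈ s, ∀ S' ∈ s, S ⊆ S' ∨ S' ⊆ S := fun S hS S' hS' =>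
      hchain S (mem_cons.2 (Or.inr hS)) S' (mem_cons.2 (Or.inr hS'))
    have hmem : s.inf id ∈ s := ih hs'
    rw [Finset.inf_cons]
    rcases hchain a (mem_cons_self a s) (s.inf id) (mem_cons.2 (Or.inr hmem)) with h | h
    · have : (id a ⊓ s.inf id : Finset α) = a := inf_eq_left.2 h
      rw [this]; exact mem_cons_self a s
    · have : (id a ⊓ s.inf id : Finset α) = s.inf id := inf_eq_right.2 h
      rw [this]; exact mem_cons.2 (Or.inr hmem)

/-- x-value of the union of a laminar family with integral values is integral. -/
lemma laminar_union_int (x : α → ℝ) :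
    ∀ (T : Finset (Finset α)),
      (∀ S ∈ T, ∀ S' ∈ T, S ⊆ S' ∨ S' ⊆ S ∨ Disjoint S S') →
      (∀ S ∈ T, ∃ n : ℤ, ∑ i ∈ S, x i = (n : ℝ)) →
      ∃ n : ℤ, ∑ i ∈ T.sup id, x i = (n : ℝ) := by
  classical
  intro T
  induction T using Finset.strongInduction with
  | _ T ih =>
    intro hlam hint
    rcases T.eq_empty_or_nonempty with rfl | hne
    · exact ⟨0, by simp⟩
    obtain ⟨M, hM, hMmax⟩ := T.exists_maximal hne
    set T₂ := T.filter (fun S => ¬ S ⊆ M) with hT₂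
    have hT₂ss : T₂ ⊂ T := by
      refine Finset.ssubset_iff_of_subset (filter_subset _ _) |>.2 ⟨M, hM, by simp [hT₂]⟩
    have hsup : T.sup id = M ∪ T₂.sup id := by
      apply Finset.Subset.antisymm
      · intro j hj
        rw [Finset.mem_sup] at hj
        obtain ⟨S, hS, hjS⟩ := hj
        by_cases hSM : S ⊆ M
        · exact mem_union_left _ (hSM hjS)
        · exact mem_union_right _ (Finset.mem_sup.2 ⟨S, by simp [hT₂, hS, hSM], hjS⟩)
      · intro j hj
        rcases mem_union.1 hj with hj | hj
        · exact Finset.mem_sup.2 ⟨M, hM, hj⟩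
        · rw [Finset.mem_sup] at hj
          obtain ⟨S, hS, hjS⟩ := hj
          exact Finset.mem_sup.2 ⟨S, (filter_subset _ _) hS, hjS⟩
    have hdisj : Disjoint M (T₂.sup id) := by
      rw [Finset.disjoint_sup_right]
      intro S hS
      rw [hT₂, mem_filter] at hS
      rcases hlam M hM S hS.1 with h | h | h
      · -- M ⊆ S: then M ⊂ S since ¬ S ⊆ M, contradicting maximality
        exact absurd (hMmax hS.1 h) hS.2
      · exact absurd h hS.2
      · exact h
    obtain ⟨n, hn⟩ := hint M hM
    obtain ⟨m, hm⟩ := ih T₂ hT₂ss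
      (fun S hS S' hS' => hlam S ((filter_subset _ _) hS) S' ((filter_subset _ _) hS'))
      (fun S hS => hint S ((filter_subset _ _) hS))
    refine ⟨n + m, ?_⟩
    rw [hsup, Finset.sum_union hdisj, hn, hm]; push_cast; ring

/-- The cell of `i` with respect to a family `𝒯`. -/
noncomputable def cellOf (𝒯 : Finset (Finset α)) (i : α) : Finset α :=
  ((𝒯.filter (fun S => i ∈ S)).inf id) \ ((𝒯.filter (fun S => i ∉ S)).sup id)

lemma mem_cellOf_self {𝒯 : Finset (Finset α)} {i : α} (h : ∃ S ∈ 𝒯, i ∈ S) :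
    i ∈ cellOf 𝒯 i := by
  classical
  rw [cellOf, mem_sdiff]
  constructor
  · have : ({i} : Finset α) ⊆ (𝒯.filter (fun S => i ∈ S)).inf id :=
      Finset.le_inf fun S hS => by
        simpa using (mem_filter.1 hS).2
    exact Finset.singleton_subset_iff.1 this
  · intro hmem
    rw [Finset.mem_sup] at hmem
    obtain ⟨S, hS, hiS⟩ := hmem
    exact (mem_filter.1 hS).2 hiS

lemma cellOf_subset_of_mem {𝒯 : Finset (Finset α)} {i : α} {S : Finset α}
    (hS : S ∈ 𝒯) (hi : i ∈ S) : cellOf 𝒯 i ⊆ S := by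
  classical
  intro j hj
  exact (Finset.inf_le (mem_filter.2 ⟨hS, hi⟩) : _ ≤ id S) ((Finset.mem_sdiff.1 hj).1)

lemma mem_iff_of_mem_cellOf {𝒯 : Finset (Finset α)} {i j : α} (hj : j ∈ cellOf 𝒯 i) :
    ∀ S ∈ 𝒯, (i ∈ S ↔ j ∈ S) := by
  classical
  intro S hS
  rw [cellOf, mem_sdiff] at hj
  constructor
  · intro hiS
    exact (Finset.inf_le (mem_filter.2 ⟨hS, hiS⟩) : _ ≤ id S) hj.1
  · intro hjS
    by_contra hiS
    exact hj.2 (Finset.mem_sup.2 ⟨S, mem_filter.2 ⟨hS, hiS⟩, hjS⟩)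

lemma cellOf_eq_of_mem_cellOf {𝒯 : Finset (Finset α)} {i j : α} (hj : j ∈ cellOf 𝒯 i) :
    cellOf 𝒯 j = cellOf 𝒯 i := by
  classical
  have hiff := mem_iff_of_mem_cellOf hj
  rw [cellOf, cellOf]
  have h1 : 𝒯.filter (fun S => j ∈ S) = 𝒯.filter (fun S => i ∈ S) :=
    Finset.filter_congr fun S hS => by rw [hiff S hS]
  have h2 : 𝒯.filter (fun S => j ∉ S) = 𝒯.filter (fun S => i ∉ S) :=
    Finset.filter_congr fun S hS => by rw [hiff S hS]
  rw [h1, h2]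

lemma cellOf_disjoint {𝒯 : Finset (Finset α)} {i i' : α}
    (h : cellOf 𝒯 i ≠ cellOf 𝒯 i') : Disjoint (cellOf 𝒯 i) (cellOf 𝒯 i') := by
  classical
  rw [Finset.disjoint_left]
  intro j hji hji'
  exact h ((cellOf_eq_of_mem_cellOf hji).symm.trans (cellOf_eq_of_mem_cellOf hji'))

/-- Any member of the family is the disjoint union of the cells of its elements; hence any
function agreeing with `x` on all cells agrees on all members of the family. -/
lemma sum_eq_of_cells_eq {𝒯 : Finset (Finset α)} {x y : α → ℝ}
    (hcell : ∀ i, (∃ S ∈ 𝒯, i ∈ S) → ∑ j ∈ cellOf 𝒯 i, y j = ∑ j ∈ cellOf 𝒯 i, x j)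
    {S : Finset α} (hS : S ∈ 𝒯) : ∑ i ∈ S, y i = ∑ i ∈ S, x i := by
  classical
  have hSrep : S = (S.image (cellOf 𝒯)).biUnion id := by
    apply Finset.Subset.antisymm
    · intro i hi
      exact Finset.mem_biUnion.2 ⟨cellOf 𝒯 i, Finset.mem_image_of_mem _ hi,
        mem_cellOf_self ⟨S, hS, hi⟩⟩
    · intro j hj
      rw [Finset.mem_biUnion] at hj
      obtain ⟨c, hc, hjc⟩ := hj
      obtain ⟨i, hi, rfl⟩ := Finset.mem_image.1 hc
      have := (mem_iff_of_mem_cellOf hjc S hS).1 hi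
      exact this
  have hdisj : ∀ c₁ ∈ S.image (cellOf 𝒯), ∀ c₂ ∈ S.image (cellOf 𝒯), c₁ ≠ c₂ →
      Disjoint (id c₁) (id c₂) := by
    intro c₁ hc₁ c₂ hc₂ hne
    obtain ⟨i₁, _, rfl⟩ := Finset.mem_image.1 hc₁
    obtain ⟨i₂, _, rfl⟩ := Finset.mem_image.1 hc₂
    exact cellOf_disjoint hne
  have hd : Set.PairwiseDisjoint ↑(S.image (cellOf 𝒯)) (id : Finset α → Finset α) := by
    intro c₁ hc₁ c₂ hc₂ hne
    exact hdisj c₁ hc₁ c₂ hc₂ hne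
  have key : ∀ z : α → ℝ, ∑ i ∈ S, z i = ∑ c ∈ S.image (cellOf 𝒯), ∑ j ∈ c, z j := by
    intro z
    conv_lhs => rw [hSrep]
    exact Finset.sum_biUnion hd
  rw [key y, key x]
  apply Finset.sum_congr rfl
  intro c hc
  obtain ⟨i, hi, rfl⟩ := Finset.mem_image.1 hc
  exact hcell i ⟨S, hS, hi⟩

lemma sup_mem_of_closed {T 𝒯 : Finset (Finset α)} (hT : T ⊆ 𝒯)
    (hclosed : ∀ S ∈ 𝒯, ∀ S' ∈ 𝒯, S ∪ S' ∈ 𝒯) (hne : T.Nonempty) : T.sup id ∈ 𝒯 := by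
  classical
  induction hne using Finset.Nonempty.cons_induction with
  | singleton a => simpa using hT (by simp)
  | cons a s ha hs ih =>
    have ha' : a ∈ 𝒯 := hT (mem_cons_self a s)
    have hs' : s ⊆ 𝒯 := fun x hx => hT (mem_cons.2 (Or.inr hx))
    have := ih hs'
    rw [Finset.sup_cons]
    simpa [Finset.sup_eq_union] using hclosed a ha' (s.sup id) this

/-- Generic: the cell value is integral provided the `M` part and `M ∩ U` part are. -/
lemma cell_int_aux {x : α → ℝ} {𝒯 : Finset (Finset α)} {i : α}
    (hM : ∃ n : ℤ, ∑ j ∈ (𝒯.filter (fun S => i ∈ S)).inf id, x j = (n : ℝ))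
    (hMU : ∃ n : ℤ, ∑ j ∈ ((𝒯.filter (fun S => i ∈ S)).inf id ∩
        (𝒯.filter (fun S => i ∉ S)).sup id), x j = (n : ℝ)) :
    ∃ n : ℤ, ∑ j ∈ cellOf 𝒯 i, x j = (n : ℝ) := by
  classical
  obtain ⟨n, hn⟩ := hM
  obtain ⟨m, hm⟩ := hMU
  have h1 : cellOf 𝒯 i = (𝒯.filter (fun S => i ∈ S)).inf id \
      ((𝒯.filter (fun S => i ∈ S)).inf id ∩ (𝒯.filter (fun S => i ∉ S)).sup id) := by
    rw [cellOf, Finset.sdiff_inter_self_left]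
  refine ⟨n - m, ?_⟩
  rw [h1, Finset.sum_sdiff_eq_sub (Finset.inter_subset_left), hn, hm]
  push_cast; ring

lemma cell_int_lattice {x : α → ℝ} {𝒯 : Finset (Finset α)}
    (hI : ∀ S ∈ 𝒯, ∀ S' ∈ 𝒯, S ∩ S' ∈ 𝒯) (hU : ∀ S ∈ 𝒯, ∀ S' ∈ 𝒯, S ∪ S' ∈ 𝒯)
    (hint : ∀ S ∈ 𝒯, ∃ n : ℤ, ∑ j ∈ S, x j = (n : ℝ))
    {i : α} (hcov : ∃ S ∈ 𝒯, i ∈ S) :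
    ∃ n : ℤ, ∑ j ∈ cellOf 𝒯 i, x j = (n : ℝ) := by
  classical
  obtain ⟨S₀, hS₀, hiS₀⟩ := hcov
  have hMmem : (𝒯.filter (fun S => i ∈ S)).inf id ∈ 𝒯 :=
    inf_mem_of_closed (filter_subset _ _) hI ⟨S₀, mem_filter.2 ⟨hS₀, hiS₀⟩⟩
  apply cell_int_aux (hint _ hMmem)
  rcases (𝒯.filter (fun S => i ∉ S)).eq_empty_or_nonempty with he | hne
  · rw [he]
    exact ⟨0, by simp⟩
  · have hrep : (𝒯.filter (fun S => i ∈ S)).inf id ∩ (𝒯.filter (fun S => i ∉ S)).sup id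
        = ((𝒯.filter (fun S => i ∉ S)).image
            (fun S => (𝒯.filter (fun S => i ∈ S)).inf id ∩ S)).sup id := by
      ext j
      simp only [Finset.mem_inter, Finset.mem_sup, Finset.mem_image]
      constructor
      · rintro ⟨hjM, S, hS, hjS⟩
        exact ⟨_, ⟨S, hS, rfl⟩, Finset.mem_inter.2 ⟨hjM, hjS⟩⟩
      · rintro ⟨c, ⟨S, hS, rfl⟩, hjc⟩
        rcases Finset.mem_inter.1 hjc with ⟨h1, h2⟩
        exact ⟨h1, S, hS, h2⟩
    rw [hrep]
    have himg : ((𝒯.filter (fun S => i ∉ S)).image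
        (fun S => (𝒯.filter (fun S => i ∈ S)).inf id ∩ S)) ⊆ 𝒯 := by
      intro c hc
      obtain ⟨S, hS, rfl⟩ := Finset.mem_image.1 hc
      exact hI _ hMmem S ((filter_subset _ _) hS)
    exact hint _ (sup_mem_of_closed himg hU (hne.image _))

lemma cell_int_laminar {x : α → ℝ} {𝒯 : Finset (Finset α)}
    (hlam : ∀ S ∈ 𝒯, ∀ S' ∈ 𝒯, S ⊆ S' ∨ S' ⊆ S ∨ Disjoint S S')
    (hint : ∀ S ∈ 𝒯, ∃ n : ℤ, ∑ j ∈ S, x j = (n : ℝ))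
    {i : α} (hcov : ∃ S ∈ 𝒯, i ∈ S) :
    ∃ n : ℤ, ∑ j ∈ cellOf 𝒯 i, x j = (n : ℝ) := by
  classical
  obtain ⟨S₀, hS₀, hiS₀⟩ := hcov
  have hchain : ∀ S ∈ 𝒯.filter (fun S => i ∈ S), ∀ S' ∈ 𝒯.filter (fun S => i ∈ S),
      S ⊆ S' ∨ S' ⊆ S := by
    intro S hS S' hS'
    rcases mem_filter.1 hS with ⟨hS1, hS2⟩
    rcases mem_filter.1 hS' with ⟨hS1', hS2'⟩
    rcases hlam S hS1 S' hS1' with h | h | h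
    · exact Or.inl h
    · exact Or.inr h
    · exact absurd (Finset.disjoint_left.1 h hS2) (fun hh => hh hS2')
  have hMfil : (𝒯.filter (fun S => i ∈ S)).inf id ∈ 𝒯.filter (fun S => i ∈ S) :=
    inf_mem_of_chain hchain ⟨S₀, mem_filter.2 ⟨hS₀, hiS₀⟩⟩
  have hMmem : (𝒯.filter (fun S => i ∈ S)).inf id ∈ 𝒯 := (mem_filter.1 hMfil).1
  have hiM : i ∈ (𝒯.filter (fun S => i ∈ S)).inf id := (mem_filter.1 hMfil).2
  apply cell_int_aux (hint _ hMmem)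
  have hrep : (𝒯.filter (fun S => i ∈ S)).inf id ∩ (𝒯.filter (fun S => i ∉ S)).sup id
      = (𝒯.filter (fun S => i ∉ S ∧ S ⊆ (𝒯.filter (fun S => i ∈ S)).inf id)).sup id := by
    ext j
    simp only [Finset.mem_inter, Finset.mem_sup, Finset.mem_filter]
    constructor
    · rintro ⟨hjM, S, ⟨hS1, hS2⟩, hjS⟩
      rcases hlam S hS1 _ hMmem with h | h | h
      · exact ⟨S, ⟨hS1, hS2, h⟩, hjS⟩
      · exact absurd (h hiM) hS2
      · exact absurd (Finset.disjoint_left.1 h hjS) (fun hh => hh hjM)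
    · rintro ⟨S, ⟨hS1, hS2, hS3⟩, hjS⟩
      exact ⟨hS3 hjS, S, ⟨hS1, hS2⟩, hjS⟩
  rw [hrep]
  exact laminar_union_int x _
    (fun S hS S' hS' => hlam S ((filter_subset _ _) hS) S' ((filter_subset _ _) hS'))
    (fun S hS => hint S ((filter_subset _ _) hS))

noncomputable def sumF (A : Finset α) : (α → ℝ) →ₗ[ℝ] ℝ :=
  ∑ i ∈ A, LinearMap.proj i

lemma sumF_apply (A : Finset α) (d : α → ℝ) : sumF A d = ∑ i ∈ A, d i := by
  simp [sumF]

lemma kernel_exists (F : Finset α) (hF : F.Nonempty)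
    (P R : Finset (Finset α))
    (hPd : ∀ A ∈ P, ∀ A' ∈ P, A ≠ A' → Disjoint A A')
    (hRd : ∀ Bb ∈ R, ∀ Bb' ∈ R, Bb ≠ Bb' → Disjoint Bb Bb')
    (hPF : P.biUnion id = F) (hRF : R.biUnion id = F)
    (hcard : P.card + R.card ≤ F.card) :
    ∃ d : α → ℝ, (∀ A ∈ P, ∑ i ∈ A, d i = 0) ∧ (∀ Bb ∈ R, ∑ i ∈ Bb, d i = 0) ∧
      ∃ i ∈ F, d i ≠ 0 := by
  classical
  -- P is nonempty
  have hPne : P.Nonempty := by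
    rcases hF with ⟨i0, hi0⟩
    rw [← hPF, Finset.mem_biUnion] at hi0
    obtain ⟨A₀, hA₀, _⟩ := hi0
    exact ⟨A₀, hA₀⟩
  obtain ⟨A₀, hA₀⟩ := hPne
  set P' := P.erase A₀ with hP'
  set Fc := (Finset.univ : Finset α) \ F with hFc
  -- the big linear map
  set Φ : (α → ℝ) →ₗ[ℝ] ((↥Fc → ℝ) × ((↥P' → ℝ) × (↥R → ℝ))) :=
    LinearMap.prod (LinearMap.pi fun e => LinearMap.proj (e : α))
      (LinearMap.prod (LinearMap.pi fun A => sumF (A : Finset α))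
        (LinearMap.pi fun Bb => sumF (Bb : Finset α))) with hΦ
  have hker : LinearMap.ker Φ ≠ ⊥ := by
    intro hbot
    have h1 : Module.finrank ℝ (↥(LinearMap.range Φ)) + Module.finrank ℝ (↥(LinearMap.ker Φ))
        = Module.finrank ℝ (α → ℝ) := LinearMap.finrank_range_add_finrank_ker Φ
    have h2 : Module.finrank ℝ (↥(LinearMap.ker Φ)) = 0 := by
      rw [hbot]; simp
    have h3 : Module.finrank ℝ (↥(LinearMap.range Φ))
        ≤ Module.finrank ℝ ((↥Fc → ℝ) × ((↥P' → ℝ) × (↥R → ℝ))) := Submodule.finrank_le _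
    have h4 : Module.finrank ℝ ((↥Fc → ℝ) × ((↥P' → ℝ) × (↥R → ℝ)))
        = Fc.card + (P'.card + R.card) := by
      rw [Module.finrank_prod, Module.finrank_prod, Module.finrank_pi, Module.finrank_pi,
        Module.finrank_pi, Fintype.card_coe, Fintype.card_coe, Fintype.card_coe]
    have h5 : Module.finrank ℝ (α → ℝ) = Fintype.card α := Module.finrank_pi ℝ
    have h6 : Fc.card = Fintype.card α - F.card := by
      rw [hFc, Finset.card_sdiff_of_subset (Finset.subset_univ F), Finset.card_univ]
    have h7 : P'.card = P.card - 1 := by rw [hP', Finset.card_erase_of_mem hA₀]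
    have h8 : F.card ≤ Fintype.card α := by
      rw [← Finset.card_univ]; exact Finset.card_le_card (Finset.subset_univ F)
    have h9 : 1 ≤ P.card := Finset.card_pos.2 ⟨A₀, hA₀⟩
    omega
  obtain ⟨d, hdker, hdne⟩ := (Submodule.ne_bot_iff _).1 hker
  have hΦd : Φ d = 0 := (LinearMap.mem_ker).1 hdker
  have hout : ∀ i ∉ F, d i = 0 := by
    intro i hi
    have : (Φ d).1 ⟨i, by simp [hFc, hi]⟩ = 0 := by rw [hΦd]; rfl
    simpa [hΦ] using this
  have hP'sum : ∀ A ∈ P', ∑ i ∈ A, d i = 0 := by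
    intro A hA
    have : (Φ d).2.1 ⟨A, hA⟩ = 0 := by rw [hΦd]; rfl
    simpa [hΦ, sumF_apply] using this
  have hRsum : ∀ Bb ∈ R, ∑ i ∈ Bb, d i = 0 := by
    intro Bb hBb
    have : (Φ d).2.2 ⟨Bb, hBb⟩ = 0 := by rw [hΦd]; rfl
    simpa [hΦ, sumF_apply] using this
  -- sum over F via the two partitions
  have hFP : ∑ i ∈ F, d i = ∑ A ∈ P, ∑ i ∈ A, d i := by
    rw [← hPF]
    exact Finset.sum_biUnion (fun A hA A' hA' hne => hPd A hA A' hA' hne)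
  have hFR : ∑ i ∈ F, d i = ∑ Bb ∈ R, ∑ i ∈ Bb, d i := by
    rw [← hRF]
    exact Finset.sum_biUnion (fun A hA A' hA' hne => hRd A hA A' hA' hne)
  have hFR0 : ∑ i ∈ F, d i = 0 := by
    rw [hFR]
    exact Finset.sum_eq_zero hRsum
  have hA₀sum : ∑ i ∈ A₀, d i = 0 := by
    have hsplit : (∑ A ∈ P', ∑ i ∈ A, d i) + ∑ i ∈ A₀, d i = ∑ A ∈ P, ∑ i ∈ A, d i :=
      Finset.sum_erase_add P _ hA₀
    have hz : ∑ A ∈ P', ∑ i ∈ A, d i = 0 := Finset.sum_eq_zero hP'sum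
    have h0 : ∑ A ∈ P, ∑ i ∈ A, d i = 0 := by rw [← hFP, hFR0]
    linarith
  have hPsum : ∀ A ∈ P, ∑ i ∈ A, d i = 0 := by
    intro A hA
    by_cases hAA : A = A₀
    · rw [hAA]; exact hA₀sum
    · exact hP'sum A (Finset.mem_erase.2 ⟨hAA, hA⟩)
  refine ⟨d, hPsum, hRsum, ?_⟩
  by_contra hcon
  push_neg at hcon
  apply hdne
  funext i
  by_cases hi : i ∈ F
  · exact hcon i hi
  · exact hout i hi

lemma round_aux : ∀ N : ℕ, ∀ (F : Finset α) (P R : Finset (Finset α)) (x : α → ℝ),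
    (∀ A ∈ P, A ⊆ F) → (∀ Bb ∈ R, Bb ⊆ F) →
    (∀ A ∈ P, ∀ A' ∈ P, A ≠ A' → Disjoint A A') →
    (∀ Bb ∈ R, ∀ Bb' ∈ R, Bb ≠ Bb' → Disjoint Bb Bb') →
    (∀ A ∈ P, ∃ n : ℤ, ∑ i ∈ A, x i = (n : ℝ)) →
    (∀ Bb ∈ R, ∃ n : ℤ, ∑ i ∈ Bb, x i = (n : ℝ)) →
    2 * F.card + P.card + R.card
      + (F.filter (fun i => ¬ ∃ n : ℤ, x i = (n : ℝ))).card ≤ N →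
    ∃ y : α → ℝ, (∀ i ∈ F, ∃ n : ℤ, y i = (n : ℝ)) ∧
      (∀ A ∈ P, ∑ i ∈ A, y i = ∑ i ∈ A, x i) ∧
      (∀ Bb ∈ R, ∑ i ∈ Bb, y i = ∑ i ∈ Bb, x i) := by
  classical
  intro N
  induction N with
  | zero =>
    intro F P R x hPF hRF hPd hRd hxP hxR hm
    refine ⟨x, fun i hi => ?_, fun A _ => rfl, fun Bb _ => rfl⟩
    by_contra hfrac
    have : i ∈ F.filter (fun i => ¬ ∃ n : ℤ, x i = (n : ℝ)) := mem_filter.2 ⟨hi, hfrac⟩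
    have h1 : 0 < (F.filter (fun i => ¬ ∃ n : ℤ, x i = (n : ℝ))).card := card_pos.2 ⟨i, this⟩
    omega
  | succ N IH =>
    intro F P R x hPF hRF hPd hRd hxP hxR hm
    -- Case 1: everything integral
    by_cases hall : ∀ i ∈ F, ∃ n : ℤ, x i = (n : ℝ)
    · exact ⟨x, hall, fun A _ => rfl, fun Bb _ => rfl⟩
    push_neg at hall
    obtain ⟨i₀, hi₀F, hi₀frac⟩ := hall
    -- Case 2: remove empty sets
    by_cases hPe : ∅ ∈ P
    · obtain ⟨y, hy1, hy2, hy3⟩ := IH F (P.erase ∅) R x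
        (fun A hA => hPF A (mem_of_mem_erase hA)) hRF
        (fun A hA A' hA' h => hPd A (mem_of_mem_erase hA) A' (mem_of_mem_erase hA') h)
        hRd (fun A hA => hxP A (mem_of_mem_erase hA)) hxR
        (by have := Finset.card_erase_of_mem hPe
            have : 1 ≤ P.card := card_pos.2 ⟨∅, hPe⟩
            rw [Finset.card_erase_of_mem hPe]; omega)
      refine ⟨y, hy1, fun A hA => ?_, hy3⟩
      by_cases hAe : A = ∅
      · subst hAe; simp
      · exact hy2 A (mem_erase.2 ⟨hAe, hA⟩)
    by_cases hRe : ∅ ∈ R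
    · obtain ⟨y, hy1, hy2, hy3⟩ := IH F P (R.erase ∅) x
        hPF (fun A hA => hRF A (mem_of_mem_erase hA)) hPd
        (fun A hA A' hA' h => hRd A (mem_of_mem_erase hA) A' (mem_of_mem_erase hA') h)
        hxP (fun A hA => hxR A (mem_of_mem_erase hA))
        (by have : 1 ≤ R.card := card_pos.2 ⟨∅, hRe⟩
            rw [Finset.card_erase_of_mem hRe]; omega)
      refine ⟨y, hy1, hy2, fun A hA => ?_⟩
      by_cases hAe : A = ∅
      · subst hAe; simp
      · exact hy3 A (mem_erase.2 ⟨hAe, hA⟩)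
    -- Case 3: some element of F has integral value : remove it
    by_cases hint : ∃ i ∈ F, ∃ n : ℤ, x i = (n : ℝ)
    · obtain ⟨i, hiF, hi⟩ := hint
      have hkey : ∀ A ∈ P ∪ R, ∃ n : ℤ, ∑ j ∈ A.erase i, x j = (n : ℝ) := by
        intro A hA
        have hAint : ∃ n : ℤ, ∑ j ∈ A, x j = (n : ℝ) := by
          rcases mem_union.1 hA with h | h
          · exact hxP A h
          · exact hxR A h
        obtain ⟨n, hn⟩ := hAint
        obtain ⟨p, hp⟩ := hi
        by_cases hiA : i ∈ A
        · exact ⟨n - p, by rw [Finset.sum_erase_eq_sub hiA, hn, hp]; push_cast; ring⟩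
        · exact ⟨n, by rw [Finset.erase_eq_of_notMem hiA, hn]⟩
      obtain ⟨y', hy1, hy2, hy3⟩ := IH (F.erase i)
          (P.image (fun A => A.erase i)) (R.image (fun A => A.erase i)) x
        (by rintro A' hA'
            obtain ⟨A, hA, rfl⟩ := mem_image.1 hA'
            exact Finset.erase_subset_erase i (hPF A hA))
        (by rintro A' hA'
            obtain ⟨A, hA, rfl⟩ := mem_image.1 hA'
            exact Finset.erase_subset_erase i (hRF A hA))
        (by rintro A' hA' B' hB' hne
            obtain ⟨A, hA, rfl⟩ := mem_image.1 hA'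
            obtain ⟨Bb, hBb, rfl⟩ := mem_image.1 hB'
            have : A ≠ Bb := fun h => hne (by rw [h])
            exact (hPd A hA Bb hBb this).mono (erase_subset i A) (erase_subset i Bb))
        (by rintro A' hA' B' hB' hne
            obtain ⟨A, hA, rfl⟩ := mem_image.1 hA'
            obtain ⟨Bb, hBb, rfl⟩ := mem_image.1 hB'
            have : A ≠ Bb := fun h => hne (by rw [h])
            exact (hRd A hA Bb hBb this).mono (erase_subset i A) (erase_subset i Bb))
        (by rintro A' hA'
            obtain ⟨A, hA, rfl⟩ := mem_image.1 hA'
            exact hkey A (mem_union.2 (Or.inl hA)))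
        (by rintro A' hA'
            obtain ⟨A, hA, rfl⟩ := mem_image.1 hA'
            exact hkey A (mem_union.2 (Or.inr hA)))
        (by have h1 : (F.erase i).card = F.card - 1 := Finset.card_erase_of_mem hiF
            have h2 : (P.image (fun A => A.erase i)).card ≤ P.card := Finset.card_image_le
            have h3 : (R.image (fun A => A.erase i)).card ≤ R.card := Finset.card_image_le
            have h4 : ((F.erase i).filter (fun j => ¬ ∃ n : ℤ, x j = (n : ℝ))).card
                ≤ (F.filter (fun j => ¬ ∃ n : ℤ, x j = (n : ℝ))).card :=
              Finset.card_le_card (fun j hj => mem_filter.2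
                ⟨mem_of_mem_erase (mem_filter.1 hj).1, (mem_filter.1 hj).2⟩)
            have h5 : 1 ≤ F.card := card_pos.2 ⟨i, hiF⟩
            omega)
      refine ⟨Function.update y' i (x i), ?_, ?_, ?_⟩
      · intro j hj
        by_cases hji : j = i
        · subst hji; rw [Function.update_self]; exact hi
        · rw [Function.update_of_ne hji]; exact hy1 j (mem_erase.2 ⟨hji, hj⟩)
      · intro A hA
        by_cases hiA : i ∈ A
        · rw [← Finset.sum_erase_add A _ hiA, ← Finset.sum_erase_add A x hiA]
          have he : ∑ j ∈ A.erase i, Function.update y' i (x i) j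
              = ∑ j ∈ A.erase i, y' j :=
            Finset.sum_congr rfl fun j hj => Function.update_of_ne (ne_of_mem_erase hj) _ _
          rw [he, hy2 _ (mem_image_of_mem _ hA), Function.update_self]
        · have he : ∑ j ∈ A, Function.update y' i (x i) j = ∑ j ∈ A, y' j :=
            Finset.sum_congr rfl fun j hj =>
              Function.update_of_ne (fun h => hiA (by rw [← h]; exact hj)) _ _
          rw [he]
          have : A.erase i = A := Finset.erase_eq_of_notMem hiA
          rw [← this] at hA ⊢
          exact hy2 _ (mem_image_of_mem _ (this ▸ hA))
      · intro A hA
        by_cases hiA : i ∈ A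
        · rw [← Finset.sum_erase_add A _ hiA, ← Finset.sum_erase_add A x hiA]
          have he : ∑ j ∈ A.erase i, Function.update y' i (x i) j
              = ∑ j ∈ A.erase i, y' j :=
            Finset.sum_congr rfl fun j hj => Function.update_of_ne (ne_of_mem_erase hj) _ _
          rw [he, hy3 _ (mem_image_of_mem _ hA), Function.update_self]
        · have he : ∑ j ∈ A, Function.update y' i (x i) j = ∑ j ∈ A, y' j :=
            Finset.sum_congr rfl fun j hj =>
              Function.update_of_ne (fun h => hiA (by rw [← h]; exact hj)) _ _
          rw [he]
          have : A.erase i = A := Finset.erase_eq_of_notMem hiA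
          rw [← this] at hA ⊢
          exact hy3 _ (mem_image_of_mem _ (this ▸ hA))
    push_neg at hint
    have hint' : ∀ i ∈ F, ¬ ∃ n : ℤ, x i = (n : ℝ) := fun i hi h => by
      obtain ⟨n, hn⟩ := h; exact hint i hi n hn
    -- Case 4: an element of F covered by neither family
    by_cases hunc : ∃ i ∈ F, (∀ A ∈ P, i ∉ A) ∧ (∀ Bb ∈ R, i ∉ Bb)
    · obtain ⟨i, hiF, hiP, hiR⟩ := hunc
      have hsums : ∀ A : Finset α, i ∉ A →
          ∑ j ∈ A, Function.update x i 0 j = ∑ j ∈ A, x j :=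
        fun A hiA => Finset.sum_update_of_notMem hiA x 0
      have hiFr : i ∈ F.filter (fun j => ¬ ∃ n : ℤ, x j = (n : ℝ)) :=
        mem_filter.2 ⟨hiF, hint' i hiF⟩
      have hsub : F.filter (fun j => ¬ ∃ n : ℤ, Function.update x i 0 j = (n : ℝ))
          ⊆ (F.filter (fun j => ¬ ∃ n : ℤ, x j = (n : ℝ))).erase i := by
        intro j hj
        rcases mem_filter.1 hj with ⟨hjF, hjfrac⟩
        by_cases hji : j = i
        · exact absurd ⟨0, by rw [hji, Function.update_self]; norm_num⟩ hjfrac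
        · exact mem_erase.2 ⟨hji, mem_filter.2 ⟨hjF, by
            rwa [Function.update_of_ne hji] at hjfrac⟩⟩
      obtain ⟨y, hy1, hy2, hy3⟩ := IH F P R (Function.update x i 0) hPF hRF hPd hRd
        (fun A hA => by rw [hsums A (hiP A hA)]; exact hxP A hA)
        (fun Bb hBb => by rw [hsums Bb (hiR Bb hBb)]; exact hxR Bb hBb)
        (by have h1 := Finset.card_le_card hsub
            have h2 := Finset.card_erase_of_mem hiFr
            have h3 : 0 < (F.filter (fun j => ¬ ∃ n : ℤ, x j = (n : ℝ))).card :=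
              card_pos.2 ⟨i, hiFr⟩
            omega)
      exact ⟨y, hy1, fun A hA => by rw [hy2 A hA, hsums A (hiP A hA)],
        fun Bb hBb => by rw [hy3 Bb hBb, hsums Bb (hiR Bb hBb)]⟩
    -- Case 5: some A ∈ P contains an element free of R
    by_cases hfreeP : ∃ A ∈ P, ∃ i ∈ A, ∀ Bb ∈ R, i ∉ Bb
    · obtain ⟨A, hA, i, hiA, hiR⟩ := hfreeP
      obtain ⟨y', hy1, hy2, hy3⟩ := IH F (P.erase A) R x
        (fun A' hA' => hPF A' (mem_of_mem_erase hA')) hRF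
        (fun A' hA' A'' hA'' h =>
          hPd A' (mem_of_mem_erase hA') A'' (mem_of_mem_erase hA'') h)
        hRd (fun A' hA' => hxP A' (mem_of_mem_erase hA')) hxR
        (by rw [Finset.card_erase_of_mem hA]
            have : 1 ≤ P.card := card_pos.2 ⟨A, hA⟩
            omega)
      obtain ⟨nA, hnA⟩ := hxP A hA
      obtain ⟨m, hmm⟩ := sum_int (T := A.erase i) (y := y')
        (fun j hj => hy1 j (hPF A hA (mem_of_mem_erase hj)))
      refine ⟨Function.update y' i (((nA - m : ℤ) : ℝ)), ?_, ?_, ?_⟩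
      · intro j hj
        by_cases hji : j = i
        · subst hji; rw [Function.update_self]; exact ⟨nA - m, rfl⟩
        · rw [Function.update_of_ne hji]; exact hy1 j hj
      · intro A'' hA''
        by_cases hAA : A'' = A
        · subst hAA
          rw [← Finset.sum_erase_add A'' _ hiA]
          have he : ∑ j ∈ A''.erase i, Function.update y' i (((nA - m : ℤ) : ℝ)) j
              = ∑ j ∈ A''.erase i, y' j :=
            Finset.sum_congr rfl fun j hj => Function.update_of_ne (ne_of_mem_erase hj) _ _
          rw [he, hmm, Function.update_self, hnA]
          push_cast; ring
        · have hiA'' : i ∉ A'' := by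
            intro hcon
            exact (Finset.disjoint_left.1 (hPd A hA A'' hA'' (fun h => hAA h.symm)) hiA) hcon
          have he : ∑ j ∈ A'', Function.update y' i (((nA - m : ℤ) : ℝ)) j
              = ∑ j ∈ A'', y' j :=
            Finset.sum_congr rfl fun j hj =>
              Function.update_of_ne (fun h => hiA'' (by rw [← h]; exact hj)) _ _
          rw [he]
          exact hy2 A'' (mem_erase.2 ⟨hAA, hA''⟩)
      · intro Bb hBb
        have hiB : i ∉ Bb := hiR Bb hBb
        have he : ∑ j ∈ Bb, Function.update y' i (((nA - m : ℤ) : ℝ)) j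
            = ∑ j ∈ Bb, y' j :=
          Finset.sum_congr rfl fun j hj =>
            Function.update_of_ne (fun h => hiB (by rw [← h]; exact hj)) _ _
        rw [he]
        exact hy3 Bb hBb
    -- Case 6: some Bb ∈ R contains an element free of P (symmetric)
    by_cases hfreeR : ∃ Bb ∈ R, ∃ i ∈ Bb, ∀ A ∈ P, i ∉ A
    · obtain ⟨Bb, hBb, i, hiB, hiP⟩ := hfreeR
      obtain ⟨y', hy1, hy2, hy3⟩ := IH F P (R.erase Bb) x
        hPF (fun B' hB' => hRF B' (mem_of_mem_erase hB')) hPd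
        (fun B' hB' B'' hB'' h =>
          hRd B' (mem_of_mem_erase hB') B'' (mem_of_mem_erase hB'') h)
        hxP (fun B' hB' => hxR B' (mem_of_mem_erase hB'))
        (by rw [Finset.card_erase_of_mem hBb]
            have : 1 ≤ R.card := card_pos.2 ⟨Bb, hBb⟩
            omega)
      obtain ⟨nA, hnA⟩ := hxR Bb hBb
      obtain ⟨m, hmm⟩ := sum_int (T := Bb.erase i) (y := y')
        (fun j hj => hy1 j (hRF Bb hBb (mem_of_mem_erase hj)))
      refine ⟨Function.update y' i (((nA - m : ℤ) : ℝ)), ?_, ?_, ?_⟩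
      · intro j hj
        by_cases hji : j = i
        · subst hji; rw [Function.update_self]; exact ⟨nA - m, rfl⟩
        · rw [Function.update_of_ne hji]; exact hy1 j hj
      · intro A hA
        have hiA : i ∉ A := hiP A hA
        have he : ∑ j ∈ A, Function.update y' i (((nA - m : ℤ) : ℝ)) j
            = ∑ j ∈ A, y' j :=
          Finset.sum_congr rfl fun j hj =>
            Function.update_of_ne (fun h => hiA (by rw [← h]; exact hj)) _ _
        rw [he]
        exact hy2 A hA
      · intro B'' hB''
        by_cases hBB : B'' = Bb
        · subst hBB
          rw [← Finset.sum_erase_add B'' _ hiB]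
          have he : ∑ j ∈ B''.erase i, Function.update y' i (((nA - m : ℤ) : ℝ)) j
              = ∑ j ∈ B''.erase i, y' j :=
            Finset.sum_congr rfl fun j hj => Function.update_of_ne (ne_of_mem_erase hj) _ _
          rw [he, hmm, Function.update_self, hnA]
          push_cast; ring
        · have hiB'' : i ∉ B'' := by
            intro hcon
            exact (Finset.disjoint_left.1 (hRd Bb hBb B'' hB'' (fun h => hBB h.symm)) hiB) hcon
          have he : ∑ j ∈ B'', Function.update y' i (((nA - m : ℤ) : ℝ)) j
              = ∑ j ∈ B'', y' j :=
            Finset.sum_congr rfl fun j hj =>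
              Function.update_of_ne (fun h => hiB'' (by rw [← h]; exact hj)) _ _
          rw [he]
          exact hy3 B'' (mem_erase.2 ⟨hBB, hB''⟩)
    -- Case 7: kernel shift
    push_neg at hunc hfreeP hfreeR
    have hPFbi : P.biUnion id = F := by
      apply Finset.Subset.antisymm
      · intro j hj
        obtain ⟨A, hA, hjA⟩ := Finset.mem_biUnion.1 hj
        exact hPF A hA hjA
      · intro j hj
        by_cases hjP : ∃ A ∈ P, j ∈ A
        · obtain ⟨A, hA, hjA⟩ := hjP
          exact Finset.mem_biUnion.2 ⟨A, hA, hjA⟩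
        · push_neg at hjP
          obtain ⟨Bb, hBb, hjB⟩ := hunc j hj hjP
          obtain ⟨A, hA, hjA⟩ := hfreeR Bb hBb j hjB
          exact Finset.mem_biUnion.2 ⟨A, hA, hjA⟩
    have hRFbi : R.biUnion id = F := by
      apply Finset.Subset.antisymm
      · intro j hj
        obtain ⟨A, hA, hjA⟩ := Finset.mem_biUnion.1 hj
        exact hRF A hA hjA
      · intro j hj
        by_cases hjP : ∃ A ∈ P, j ∈ A
        · obtain ⟨A, hA, hjA⟩ := hjP
          obtain ⟨Bb, hBb, hjB⟩ := hfreeP A hA j hjA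
          exact Finset.mem_biUnion.2 ⟨Bb, hBb, hjB⟩
        · push_neg at hjP
          obtain ⟨Bb, hBb, hjB⟩ := hunc j hj hjP
          exact Finset.mem_biUnion.2 ⟨Bb, hBb, hjB⟩
    have hA2 : ∀ A ∈ P, 2 ≤ A.card := by
      intro A hA
      rcases Nat.lt_or_ge A.card 2 with h | h
      · have h01 : A.card = 0 ∨ A.card = 1 := by omega
        rcases h01 with h' | h'
        · exact absurd (Finset.card_eq_zero.1 h' ▸ hA) hPe
        · obtain ⟨a, ha⟩ := Finset.card_eq_one.1 h'
          subst ha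
          obtain ⟨n, hn⟩ := hxP _ hA
          rw [Finset.sum_singleton] at hn
          exact absurd ⟨n, hn⟩ (hint' a (hPF _ hA (Finset.mem_singleton_self a)))
      · exact h
    have hB2 : ∀ Bb ∈ R, 2 ≤ Bb.card := by
      intro Bb hBb
      rcases Nat.lt_or_ge Bb.card 2 with h | h
      · have h01 : Bb.card = 0 ∨ Bb.card = 1 := by omega
        rcases h01 with h' | h'
        · exact absurd (Finset.card_eq_zero.1 h' ▸ hBb) hRe
        · obtain ⟨a, ha⟩ := Finset.card_eq_one.1 h'
          subst ha
          obtain ⟨n, hn⟩ := hxR _ hBb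
          rw [Finset.sum_singleton] at hn
          exact absurd ⟨n, hn⟩ (hint' a (hRF _ hBb (Finset.mem_singleton_self a)))
      · exact h
    have hcardP : 2 * P.card ≤ F.card := by
      have h1 : F.card = ∑ A ∈ P, A.card := by
        rw [← hPFbi]; exact Finset.card_biUnion hPd
      have h2 : ∑ A ∈ P, 2 ≤ ∑ A ∈ P, A.card := Finset.sum_le_sum hA2
      rw [Finset.sum_const, smul_eq_mul] at h2
      omega
    have hcardR : 2 * R.card ≤ F.card := by
      have h1 : F.card = ∑ A ∈ R, A.card := by
        rw [← hRFbi]; exact Finset.card_biUnion hRd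
      have h2 : ∑ A ∈ R, 2 ≤ ∑ A ∈ R, A.card := Finset.sum_le_sum hB2
      rw [Finset.sum_const, smul_eq_mul] at h2
      omega
    obtain ⟨d, hdP, hdR, i₁, hi₁F, hdi₁⟩ := kernel_exists F ⟨i₀, hi₀F⟩ P R hPd hRd
      hPFbi hRFbi (by omega)
    set t := -(x i₁) / d i₁ with ht
    have hsum' : ∀ A : Finset α,
        ∑ j ∈ A, (x j + t * d j) = ∑ j ∈ A, x j + t * ∑ j ∈ A, d j := by
      intro A
      rw [Finset.sum_add_distrib, Finset.mul_sum]
    have hx'i₁ : x i₁ + t * d i₁ = 0 := by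
      rw [ht]; field_simp; ring
    have hfr : F.filter (fun j => ¬ ∃ n : ℤ, x j = (n : ℝ)) = F :=
      Finset.filter_true_of_mem hint'
    have hsub : F.filter (fun j => ¬ ∃ n : ℤ, x j + t * d j = (n : ℝ)) ⊆ F.erase i₁ := by
      intro j hj
      rcases mem_filter.1 hj with ⟨hjF, hjfrac⟩
      by_cases hji : j = i₁
      · subst hji
        exact absurd ⟨0, by rw [hx'i₁]; norm_num⟩ hjfrac
      · exact mem_erase.2 ⟨hji, hjF⟩
    obtain ⟨y, hy1, hy2, hy3⟩ := IH F P R (fun j => x j + t * d j) hPF hRF hPd hRd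
      (fun A hA => by
        obtain ⟨n, hn⟩ := hxP A hA
        exact ⟨n, by rw [hsum' A, hdP A hA, hn]; ring⟩)
      (fun Bb hBb => by
        obtain ⟨n, hn⟩ := hxR Bb hBb
        exact ⟨n, by rw [hsum' Bb, hdR Bb hBb, hn]; ring⟩)
      (by have h1 := Finset.card_le_card hsub
          have h2 := Finset.card_erase_of_mem hi₁F
          have h3 : 1 ≤ F.card := card_pos.2 ⟨i₁, hi₁F⟩
          have h4 : (F.filter (fun i => ¬ ∃ n : ℤ, (fun j => x j + t * d j) i = (n : ℝ))).card
              = (F.filter (fun j => ¬ ∃ n : ℤ, x j + t * d j = (n : ℝ))).card := rfl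
          rw [hfr] at hm
          rw [h4]
          omega)
    refine ⟨y, hy1, fun A hA => ?_, fun Bb hBb => ?_⟩
    · rw [hy2 A hA, hsum' A, hdP A hA]; ring
    · rw [hy3 Bb hBb, hsum' Bb, hdR Bb hBb]; ring

end PolytopeAux

lemma step_bound {a c t ε : ℝ} (hac : a ≤ c) (hε : 0 < ε) (h : t ≠ 0 → ε ≤ (c - a)/|t|) :
    a + ε * t ≤ c ∧ a - ε * t ≤ c := by
  rcases eq_or_ne t 0 with rfl | ht
  · constructor <;> simp [hac]
  · have habs : 0 < |t| := abs_pos.2 ht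
    have h2 : ε * |t| ≤ c - a := by
      have h3 := h ht
      calc ε * |t| ≤ ((c - a)/|t|) * |t| := by nlinarith
        _ = c - a := by field_simp
    constructor
    · nlinarith [le_abs_self t]
    · nlinarith [neg_abs_le t]

lemma step_bound_lo {a c t ε : ℝ} (hac : c ≤ a) (hε : 0 < ε) (h : t ≠ 0 → ε ≤ (a - c)/|t|) :
    c ≤ a + ε * t ∧ c ≤ a - ε * t := by
  have := step_bound (a := -a) (c := -c) (t := -t) (ε := ε) (by linarith)
    hε (by intro ht; rw [abs_neg]; convert h (fun hh => ht (by rw [hh]; ring)) using 2; ring)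
  constructor <;> nlinarith [this.1, this.2]

section Main
variable {α β : Type*} [Fintype α] [DecidableEq α]

lemma tight_dir_zero
    (rk : Finset α → ℕ) (C Cs : Finset β) (hCs : Cs ⊆ C) (F' G B : β → Finset α)
    (Q : Set (α → ℝ))
    (hQ : Q = {v : α → ℝ |
      (∀ i, 0 ≤ v i) ∧
      (∀ S : Finset α, ∑ i ∈ S, v i ≤ (rk S : ℝ)) ∧
      (∀ j ∈ C, (1 : ℝ) / 2 ≤ ∑ i ∈ F' j, v i ∧ ∑ i ∈ G j, v i ≤ 1) ∧
      (∀ j ∈ Cs, ∑ i ∈ B j, v i = 1)})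
    (v : α → ℝ) (hv : v ∈ Set.extremePoints ℝ Q)
    (d : α → ℝ)
    (hd0 : ∀ i, v i = 0 → d i = 0)
    (hdrk : ∀ S : Finset α, ∑ i ∈ S, v i = (rk S : ℝ) → ∑ i ∈ S, d i = 0)
    (hdF : ∀ j ∈ C, ∑ i ∈ F' j, v i = 1/2 → ∑ i ∈ F' j, d i = 0)
    (hdG : ∀ j ∈ C, ∑ i ∈ G j, v i = 1 → ∑ i ∈ G j, d i = 0)
    (hdB : ∀ j ∈ Cs, ∑ i ∈ B j, d i = 0) : d = 0 := by
  classical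
  obtain ⟨hvQ, hext⟩ := mem_extremePoints.1 hv
  rw [hQ] at hvQ
  obtain ⟨h0, h1, h2, h3⟩ := hvQ
  set E : Finset ℝ :=
    ((Finset.univ.filter (fun i : α => d i ≠ 0)).image (fun i => v i / |d i|)) ∪
    ((Finset.univ.filter (fun S : Finset α => ∑ i ∈ S, d i ≠ 0)).image
      (fun S => ((rk S : ℝ) - ∑ i ∈ S, v i) / |∑ i ∈ S, d i|)) ∪
    ((C.filter (fun j => ∑ i ∈ F' j, d i ≠ 0)).image
      (fun j => (∑ i ∈ F' j, v i - 1/2) / |∑ i ∈ F' j, d i|)) ∪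
    ((C.filter (fun j => ∑ i ∈ G j, d i ≠ 0)).image
      (fun j => (1 - ∑ i ∈ G j, v i) / |∑ i ∈ G j, d i|)) with hE
  set ε : ℝ := (insert (1:ℝ) E).min' ⟨1, mem_insert_self _ _⟩ with hε
  have hεle : ∀ r ∈ insert (1:ℝ) E, ε ≤ r := fun r hr => Finset.min'_le _ r hr
  have hεpos : 0 < ε := by
    have hmem : ε ∈ insert (1:ℝ) E := Finset.min'_mem _ _
    have hall : ∀ r ∈ insert (1:ℝ) E, 0 < r := by
      intro r hr
      rcases Finset.mem_insert.1 hr with rfl | hr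
      · norm_num
      rw [hE] at hr
      rcases Finset.mem_union.1 hr with hr | hr4
      rotate_left
      · obtain ⟨j, hj, rfl⟩ := Finset.mem_image.1 hr4
        rcases Finset.mem_filter.1 hj with ⟨hjC, hne⟩
        have := (h2 j hjC).2
        have hlt : ∑ i ∈ G j, v i < 1 := lt_of_le_of_ne this (fun h => hne (hdG j hjC h))
        exact div_pos (by linarith) (abs_pos.2 hne)
      rcases Finset.mem_union.1 hr with hr | hr3
      rotate_left
      · obtain ⟨j, hj, rfl⟩ := Finset.mem_image.1 hr3
        rcases Finset.mem_filter.1 hj with ⟨hjC, hne⟩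
        have := (h2 j hjC).1
        have hlt : 1/2 < ∑ i ∈ F' j, v i :=
          lt_of_le_of_ne this (fun h => hne (hdF j hjC h.symm))
        exact div_pos (by linarith) (abs_pos.2 hne)
      rcases Finset.mem_union.1 hr with hr1 | hr2
      · obtain ⟨i, hi, rfl⟩ := Finset.mem_image.1 hr1
        rcases Finset.mem_filter.1 hi with ⟨_, hne⟩
        have hvi : 0 < v i := lt_of_le_of_ne (h0 i) (fun h => hne (hd0 i h.symm))
        exact div_pos hvi (abs_pos.2 hne)
      · obtain ⟨S, hS, rfl⟩ := Finset.mem_image.1 hr2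
        rcases Finset.mem_filter.1 hS with ⟨_, hne⟩
        have hlt : ∑ i ∈ S, v i < (rk S : ℝ) :=
          lt_of_le_of_ne (h1 S) (fun h => hne (hdrk S h))
        exact div_pos (by linarith) (abs_pos.2 hne)
    exact hall _ hmem
  -- the two perturbed points
  have hmemE1 : ∀ i : α, d i ≠ 0 → ε ≤ v i / |d i| := by
    intro i hi
    exact hεle _ (Finset.mem_insert.2 (Or.inr (by
      rw [hE]
      exact Finset.mem_union.2 (Or.inl (Finset.mem_union.2 (Or.inl (Finset.mem_union.2 (Or.inl
        (Finset.mem_image.2 ⟨i, Finset.mem_filter.2 ⟨Finset.mem_univ i, hi⟩, rfl⟩)))))))))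
  have hmemE2 : ∀ S : Finset α, ∑ i ∈ S, d i ≠ 0 →
      ε ≤ ((rk S : ℝ) - ∑ i ∈ S, v i) / |∑ i ∈ S, d i| := by
    intro S hS
    exact hεle _ (Finset.mem_insert.2 (Or.inr (by
      rw [hE]
      exact Finset.mem_union.2 (Or.inl (Finset.mem_union.2 (Or.inl (Finset.mem_union.2 (Or.inr
        (Finset.mem_image.2 ⟨S, Finset.mem_filter.2 ⟨Finset.mem_univ S, hS⟩, rfl⟩)))))))))
  have hmemE3 : ∀ j ∈ C, ∑ i ∈ F' j, d i ≠ 0 →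
      ε ≤ (∑ i ∈ F' j, v i - 1/2) / |∑ i ∈ F' j, d i| := by
    intro j hj hS
    exact hεle _ (Finset.mem_insert.2 (Or.inr (by
      rw [hE]
      exact Finset.mem_union.2 (Or.inl (Finset.mem_union.2 (Or.inr
        (Finset.mem_image.2 ⟨j, Finset.mem_filter.2 ⟨hj, hS⟩, rfl⟩)))))))
  have hmemE4 : ∀ j ∈ C, ∑ i ∈ G j, d i ≠ 0 →
      ε ≤ (1 - ∑ i ∈ G j, v i) / |∑ i ∈ G j, d i| := by
    intro j hj hS
    exact hεle _ (Finset.mem_insert.2 (Or.inr (by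
      rw [hE]
      exact Finset.mem_union.2 (Or.inr
        (Finset.mem_image.2 ⟨j, Finset.mem_filter.2 ⟨hj, hS⟩, rfl⟩)))))
  have hsum : ∀ (S : Finset α) (c : ℝ), ∑ i ∈ S, (v i + c * d i)
      = ∑ i ∈ S, v i + c * ∑ i ∈ S, d i := by
    intro S c
    rw [Finset.sum_add_distrib, Finset.mul_sum]
  have hQmem : ∀ c : ℝ, c = ε ∨ c = -ε → (fun i => v i + c * d i) ∈ Q := by
    intro c hc
    have hcases : ∀ (a cc t : ℝ), (a ≤ cc) → (t ≠ 0 → ε ≤ (cc - a)/|t|) → a + c * t ≤ cc := by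
      intro a cc t ha ht
      rcases hc with rfl | rfl
      · exact (step_bound ha hεpos ht).1
      · have := (step_bound ha hεpos ht).2
        nlinarith [this]
    have hcases_lo : ∀ (a cc t : ℝ), (cc ≤ a) → (t ≠ 0 → ε ≤ (a - cc)/|t|) → cc ≤ a + c * t := by
      intro a cc t ha ht
      rcases hc with rfl | rfl
      · exact (step_bound_lo ha hεpos ht).1
      · have := (step_bound_lo ha hεpos ht).2
        nlinarith [this]
    rw [hQ]
    refine ⟨?_, ?_, ?_, ?_⟩
    · intro i
      have := hcases_lo (v i) 0 (d i) (h0 i) (fun ht => by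
        have := hmemE1 i ht; simpa using this)
      simpa using this
    · intro S
      rw [hsum S c]
      exact hcases _ _ _ (h1 S) (hmemE2 S)
    · intro j hj
      constructor
      · rw [hsum _ c]
        exact hcases_lo _ _ _ (h2 j hj).1 (hmemE3 j hj)
      · rw [hsum _ c]
        exact hcases _ _ _ (h2 j hj).2 (hmemE4 j hj)
    · intro j hj
      rw [hsum _ c, hdB j hj, h3 j hj]
      ring
  have hw1 : (fun i => v i + ε * d i) ∈ Q := hQmem ε (Or.inl rfl)
  have hw2 : (fun i => v i + (-ε) * d i) ∈ Q := hQmem (-ε) (Or.inr rfl)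
  have hseg : v ∈ openSegment ℝ (fun i => v i + ε * d i) (fun i => v i + (-ε) * d i) := by
    refine ⟨1/2, 1/2, by norm_num, by norm_num, by norm_num, ?_⟩
    funext i
    simp only [Pi.add_apply, Pi.smul_apply, smul_eq_mul]
    ring
  obtain ⟨heq, _⟩ := hext _ hw1 _ hw2 hseg
  funext i
  have : v i + ε * d i = v i := congrFun heq i
  have : ε * d i = 0 := by linarith
  have := mul_eq_zero.1 this
  rcases this with h | h
  · exact absurd h (ne_of_gt hεpos)
  · exact h

end Main
/-- Extreme points of the auxiliary polytope `Q` are half-integral. The ground set `𝓕`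
of the matroid is the finite type `α`, `rk` is the matroid rank function
(normalized, monotone, submodular), the sets `G j` for `j ∈ C` are pairwise disjoint,
`F' j ⊆ G j`, and for `j ∈ Cs` the set `B j ⊆ G j` is comparable with `F' j`
(so the non-matroid constraints form a laminar family). -/
theorem stmt_5 {α β : Type*} [Fintype α] [DecidableEq α]
    (rk : Finset α → ℕ)
    (hrk_le_card : ∀ S : Finset α, rk S ≤ S.card)
    (hrk_mono : ∀ ⦃S T : Finset α⦄, S ⊆ T → rk S ≤ rk T)
    (hrk_submod : ∀ S T : Finset α, rk (S ∪ T) + rk (S ∩ T) ≤ rk S + rk T)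
    (C Cs : Finset β) (hCs : Cs ⊆ C)
    (F' G B : β → Finset α)
    (hFG : ∀ j ∈ C, F' j ⊆ G j)
    (hB : ∀ j ∈ Cs, B j ⊆ G j ∧ (F' j ⊆ B j ∨ B j ⊆ F' j))
    (hdisj : ∀ j ∈ C, ∀ j' ∈ C, j ≠ j' → Disjoint (G j) (G j'))
    (Q : Set (α → ℝ))
    (hQ : Q = {v : α → ℝ |
      (∀ i, 0 ≤ v i) ∧
      (∀ S : Finset α, ∑ i ∈ S, v i ≤ (rk S : ℝ)) ∧
      (∀ j ∈ C, (1 : ℝ) / 2 ≤ ∑ i ∈ F' j, v i ∧ ∑ i ∈ G j, v i ≤ 1) ∧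
      (∀ j ∈ Cs, ∑ i ∈ B j, v i = 1)})
    (v : α → ℝ) (hv : v ∈ Set.extremePoints ℝ Q) :
    ∀ i : α, ∃ n : ℤ, 2 * v i = (n : ℝ) := by
  classical
  have hvQ : v ∈ Q := (mem_extremePoints.1 hv).1
  rw [hQ] at hvQ
  obtain ⟨h0, h1, h2, h3⟩ := hvQ
  set x : α → ℝ := fun i => 2 * v i with hx
  -- the family of tight rank constraints
  set Rt : Finset (Finset α) :=
    Finset.univ.filter (fun S : Finset α => ∑ i ∈ S, v i = (rk S : ℝ)) with hRt
  have hRtmem : ∀ S : Finset α, S ∈ Rt ↔ ∑ i ∈ S, v i = (rk S : ℝ) := by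
    intro S; rw [hRt, mem_filter]; simp
  have hRtclosed : ∀ S ∈ Rt, ∀ T ∈ Rt, S ∩ T ∈ Rt ∧ S ∪ T ∈ Rt := by
    intro S hS T hT
    have hSe : ∑ i ∈ S, v i = (rk S : ℝ) := (hRtmem S).1 hS
    have hTe : ∑ i ∈ T, v i = (rk T : ℝ) := (hRtmem T).1 hT
    have key : ∑ i ∈ S ∪ T, v i + ∑ i ∈ S ∩ T, v i = ∑ i ∈ S, v i + ∑ i ∈ T, v i :=
      Finset.sum_union_inter
    have hU : ∑ i ∈ S ∪ T, v i ≤ (rk (S ∪ T) : ℝ) := h1 _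
    have hI : ∑ i ∈ S ∩ T, v i ≤ (rk (S ∩ T) : ℝ) := h1 _
    have hsub : (rk (S ∪ T) : ℝ) + (rk (S ∩ T) : ℝ) ≤ (rk S : ℝ) + (rk T : ℝ) := by
      exact_mod_cast hrk_submod S T
    constructor
    · rw [hRtmem]; linarith
    · rw [hRtmem]; linarith
  have hRtint : ∀ S ∈ Rt, ∃ n : ℤ, ∑ i ∈ S, x i = (n : ℝ) := by
    intro S hS
    refine ⟨2 * rk S, ?_⟩
    have : ∑ i ∈ S, x i = 2 * ∑ i ∈ S, v i := by
      rw [hx, Finset.mul_sum]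
    rw [this, (hRtmem S).1 hS]
    push_cast; ring
  -- the laminar family of tight cluster constraints and tight nonnegativity constraints
  set Lt : Finset (Finset α) :=
    ((C.filter (fun j => ∑ i ∈ F' j, v i = 1/2)).image F') ∪
    ((C.filter (fun j => ∑ i ∈ G j, v i = 1)).image G) ∪
    (Cs.image B) ∪
    ((Finset.univ.filter (fun i : α => v i = 0)).image (fun i => ({i} : Finset α))) with hLt
  have hdesc : ∀ S ∈ Lt, (∃ i, v i = 0 ∧ S = {i}) ∨
      ∃ j ∈ C, S ⊆ G j ∧ (S = F' j ∨ (j ∈ Cs ∧ S = B j) ∨ S = G j) := by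
    intro S hS
    rw [hLt] at hS
    rcases Finset.mem_union.1 hS with hS' | hS4
    · rcases Finset.mem_union.1 hS' with hS'' | hS3
      · rcases Finset.mem_union.1 hS'' with hS1 | hS2
        · obtain ⟨j, hj, rfl⟩ := Finset.mem_image.1 hS1
          have hjC := (Finset.mem_filter.1 hj).1
          exact Or.inr ⟨j, hjC, hFG j hjC, Or.inl rfl⟩
        · obtain ⟨j, hj, rfl⟩ := Finset.mem_image.1 hS2
          have hjC := (Finset.mem_filter.1 hj).1
          exact Or.inr ⟨j, hjC, subset_rfl, Or.inr (Or.inr rfl)⟩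
      · obtain ⟨j, hj, rfl⟩ := Finset.mem_image.1 hS3
        exact Or.inr ⟨j, hCs hj, (hB j hj).1, Or.inr (Or.inl ⟨hj, rfl⟩)⟩
    · obtain ⟨i, hi, rfl⟩ := Finset.mem_image.1 hS4
      exact Or.inl ⟨i, (Finset.mem_filter.1 hi).2, rfl⟩
  have hlam : ∀ S ∈ Lt, ∀ T ∈ Lt, S ⊆ T ∨ T ⊆ S ∨ Disjoint S T := by
    intro S hS T hT
    rcases hdesc S hS with ⟨i, hvi, rfl⟩ | ⟨j, hjC, hSG, hScase⟩
    · by_cases hiT : i ∈ T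
      · exact Or.inl (Finset.singleton_subset_iff.2 hiT)
      · exact Or.inr (Or.inr (Finset.disjoint_singleton_left.2 hiT))
    · rcases hdesc T hT with ⟨i, hvi, rfl⟩ | ⟨j', hj'C, hTG, hTcase⟩
      · by_cases hiS : i ∈ S
        · exact Or.inr (Or.inl (Finset.singleton_subset_iff.2 hiS))
        · exact Or.inr (Or.inr (Finset.disjoint_singleton_right.2 hiS))
      · by_cases hjj : j = j'
        · subst hjj
          -- both inside the same cluster: 3×3 case analysis
          rcases hScase with rfl | ⟨hjCs, rfl⟩ | rfl
          · rcases hTcase with rfl | ⟨hjCs', rfl⟩ | rfl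
            · exact Or.inl subset_rfl
            · rcases (hB j hjCs').2 with h | h
              · exact Or.inl h
              · exact Or.inr (Or.inl h)
            · exact Or.inl (hFG j hjC)
          · rcases hTcase with rfl | ⟨hjCs', rfl⟩ | rfl
            · rcases (hB j hjCs).2 with h | h
              · exact Or.inr (Or.inl h)
              · exact Or.inl h
            · exact Or.inl subset_rfl
            · exact Or.inl (hB j hjCs).1
          · rcases hTcase with rfl | ⟨hjCs', rfl⟩ | rfl
            · exact Or.inr (Or.inl (hFG j hjC))
            · exact Or.inr (Or.inl (hB j hjCs').1)
            · exact Or.inl subset_rfl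
        · exact Or.inr (Or.inr ((hdisj j hjC j' hj'C hjj).mono hSG hTG))
  have hLtint : ∀ S ∈ Lt, ∃ n : ℤ, ∑ i ∈ S, x i = (n : ℝ) := by
    intro S hS
    have hxsum : ∀ T : Finset α, ∑ i ∈ T, x i = 2 * ∑ i ∈ T, v i := by
      intro T; rw [hx, Finset.mul_sum]
    rw [hLt] at hS
    rcases Finset.mem_union.1 hS with hS' | hS4
    · rcases Finset.mem_union.1 hS' with hS'' | hS3
      · rcases Finset.mem_union.1 hS'' with hS1 | hS2
        · obtain ⟨j, hj, rfl⟩ := Finset.mem_image.1 hS1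
          refine ⟨1, ?_⟩
          rw [hxsum, (Finset.mem_filter.1 hj).2]
          norm_num
        · obtain ⟨j, hj, rfl⟩ := Finset.mem_image.1 hS2
          refine ⟨2, ?_⟩
          rw [hxsum, (Finset.mem_filter.1 hj).2]
          norm_num
      · obtain ⟨j, hj, rfl⟩ := Finset.mem_image.1 hS3
        refine ⟨2, ?_⟩
        rw [hxsum, h3 j hj]
        norm_num
    · obtain ⟨i, hi, rfl⟩ := Finset.mem_image.1 hS4
      refine ⟨0, ?_⟩
      rw [hxsum, Finset.sum_singleton, (Finset.mem_filter.1 hi).2]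
      norm_num
  -- cell partitions
  set PP : Finset (Finset α) := (Rt.sup id).image (cellOf Rt) with hPP
  set LL : Finset (Finset α) := (Lt.sup id).image (cellOf Lt) with hLL
  have hPPd : ∀ A ∈ PP, ∀ A' ∈ PP, A ≠ A' → Disjoint A A' := by
    intro A hA A' hA' hne
    obtain ⟨i, _, rfl⟩ := Finset.mem_image.1 hA
    obtain ⟨i', _, rfl⟩ := Finset.mem_image.1 hA'
    exact cellOf_disjoint hne
  have hLLd : ∀ A ∈ LL, ∀ A' ∈ LL, A ≠ A' → Disjoint A A' := by
    intro A hA A' hA' hne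
    obtain ⟨i, _, rfl⟩ := Finset.mem_image.1 hA
    obtain ⟨i', _, rfl⟩ := Finset.mem_image.1 hA'
    exact cellOf_disjoint hne
  have hPPint : ∀ A ∈ PP, ∃ n : ℤ, ∑ i ∈ A, x i = (n : ℝ) := by
    intro A hA
    obtain ⟨i, hi, rfl⟩ := Finset.mem_image.1 hA
    exact cell_int_lattice (fun S hS T hT => (hRtclosed S hS T hT).1)
      (fun S hS T hT => (hRtclosed S hS T hT).2) hRtint (Finset.mem_sup.1 hi)
  have hLLint : ∀ A ∈ LL, ∃ n : ℤ, ∑ i ∈ A, x i = (n : ℝ) := by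
    intro A hA
    obtain ⟨i, hi, rfl⟩ := Finset.mem_image.1 hA
    exact cell_int_laminar hlam hLtint (Finset.mem_sup.1 hi)
  -- apply the rounding lemma on the full ground set
  obtain ⟨y, hy1, hy2, hy3⟩ := round_aux
    (2 * (Finset.univ : Finset α).card + PP.card + LL.card
      + ((Finset.univ : Finset α).filter (fun i => ¬ ∃ n : ℤ, x i = (n : ℝ))).card)
    Finset.univ PP LL x
    (fun A _ => Finset.subset_univ A) (fun A _ => Finset.subset_univ A)
    hPPd hLLd hPPint hLLint le_rfl
  -- transfer equalities from cells to the original families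
  have hyRt : ∀ S ∈ Rt, ∑ i ∈ S, y i = ∑ i ∈ S, x i := by
    intro S hS
    refine sum_eq_of_cells_eq (fun i hi => ?_) hS
    exact hy2 _ (Finset.mem_image_of_mem _ (Finset.mem_sup.2 hi))
  have hyLt : ∀ S ∈ Lt, ∑ i ∈ S, y i = ∑ i ∈ S, x i := by
    intro S hS
    refine sum_eq_of_cells_eq (fun i hi => ?_) hS
    exact hy3 _ (Finset.mem_image_of_mem _ (Finset.mem_sup.2 hi))
  -- the direction
  have hddsum : ∀ S : Finset α, ∑ i ∈ S, (v i - y i / 2) = ∑ i ∈ S, v i - (∑ i ∈ S, y i) / 2 := by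
    intro S
    rw [Finset.sum_sub_distrib, Finset.sum_div]
  have hdd : (fun i => v i - y i / 2) = 0 := by
    apply tight_dir_zero rk C Cs hCs F' G B Q hQ v hv
    · intro i hvi
      have hmem : ({i} : Finset α) ∈ Lt := by
        rw [hLt]
        exact Finset.mem_union.2 (Or.inr (Finset.mem_image.2
          ⟨i, Finset.mem_filter.2 ⟨Finset.mem_univ i, hvi⟩, rfl⟩))
      have := hyLt _ hmem
      rw [Finset.sum_singleton, Finset.sum_singleton] at this
      rw [this, hx]
      simp only []
      rw [hvi]; ring
    · intro S hSe
      have hmem : S ∈ Rt := (hRtmem S).2 hSe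
      rw [hddsum, hyRt S hmem]
      have : ∑ i ∈ S, x i = 2 * ∑ i ∈ S, v i := by rw [hx, Finset.mul_sum]
      rw [this]; ring
    · intro j hj ht
      have hmem : F' j ∈ Lt := by
        rw [hLt]
        exact Finset.mem_union.2 (Or.inl (Finset.mem_union.2 (Or.inl (Finset.mem_union.2 (Or.inl
          (Finset.mem_image.2 ⟨j, Finset.mem_filter.2 ⟨hj, ht⟩, rfl⟩))))))
      rw [hddsum, hyLt _ hmem]
      have : ∑ i ∈ F' j, x i = 2 * ∑ i ∈ F' j, v i := by rw [hx, Finset.mul_sum]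
      rw [this]; ring
    · intro j hj ht
      have hmem : G j ∈ Lt := by
        rw [hLt]
        exact Finset.mem_union.2 (Or.inl (Finset.mem_union.2 (Or.inl (Finset.mem_union.2 (Or.inr
          (Finset.mem_image.2 ⟨j, Finset.mem_filter.2 ⟨hj, ht⟩, rfl⟩))))))
      rw [hddsum, hyLt _ hmem]
      have : ∑ i ∈ G j, x i = 2 * ∑ i ∈ G j, v i := by rw [hx, Finset.mul_sum]
      rw [this]; ring
    · intro j hj
      have hmem : B j ∈ Lt := by
        rw [hLt]
        exact Finset.mem_union.2 (Or.inl (Finset.mem_union.2 (Or.inr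
          (Finset.mem_image.2 ⟨j, hj, rfl⟩))))
      rw [hddsum, hyLt _ hmem]
      have : ∑ i ∈ B j, x i = 2 * ∑ i ∈ B j, v i := by rw [hx, Finset.mul_sum]
      rw [this]; ring
  -- conclude
  intro i
  obtain ⟨n, hn⟩ := hy1 i (Finset.mem_univ i)
  refine ⟨n, ?_⟩
  have hzero : v i - y i / 2 = 0 := congrFun hdd i
  rw [← hn]
  linarith
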